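/- Let f ∈ ℂ{t} be a unit and r ∈ ℤ_{≥1}. There is a unique constant c ∈ ℂ such that the equation t·τ' + r·τ = τ²·f·(1 + c·t^r·τ) admits a formal solution τ ∈ ℂ[[t]] with τ(0) ≠ 0; namely c = −(1/(τ₀³ f₀))·∑_{j+k+p=r, k,p ≤ r−1} f_j τ_k τ_p where τ₀,...,τ_{r−1} are the coefficients determined inductively by τ₀ = r/f₀ and τ_n = (1/(n−r))∑_{j+k+p=n, k,p≤n−1} f_j τ_k τ_p. -/

import Mathlib

open Finset

/-- Coefficient of `t^n` in `f·τ²` (convolution). -/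
noncomputable def coeffFTau2 (f τ : ℕ → ℂ) (n : ℕ) : ℂ :=
  ∑ p ∈ Finset.HasAntidiagonal.antidiagonal n, ∑ q ∈ Finset.HasAntidiagonal.antidiagonal p.2, f p.1 * τ q.1 * τ q.2

/-- Coefficient of `t^n` in `f·τ³` (convolution). -/
noncomputable def coeffFTau3 (f τ : ℕ → ℂ) (n : ℕ) : ℂ :=
  ∑ p ∈ Finset.HasAntidiagonal.antidiagonal n, ∑ q ∈ Finset.HasAntidiagonal.antidiagonal p.2,
    ∑ w ∈ Finset.HasAntidiagonal.antidiagonal q.2, f p.1 * τ q.1 * τ w.1 * τ w.2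

/-- The coefficientwise form of `t·τ' + r·τ = τ²·f·(1 + c·t^r·τ)` at degree `n`. -/
def tauEqnCoeff (f τ : ℕ → ℂ) (r : ℕ) (c : ℂ) (n : ℕ) : Prop :=
  (n : ℂ) * τ n + (r : ℂ) * τ n =
    coeffFTau2 f τ n + c * (if r ≤ n then coeffFTau3 f τ (n - r) else 0)

/-- The restricted sum `∑_{j+k+p=n, k,p ≤ n-1} f_j τ_k τ_p`. -/
noncomputable def restrSum (f τ : ℕ → ℂ) (n : ℕ) : ℂ :=
  ∑ p ∈ Finset.HasAntidiagonal.antidiagonal n,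
    ∑ q ∈ (Finset.HasAntidiagonal.antidiagonal p.2).filter (fun q => q.1 ≤ n - 1 ∧ q.2 ≤ n - 1),
      f p.1 * τ q.1 * τ q.2

lemma restrSum_congr (f τ σ : ℕ → ℂ) (n : ℕ) (h : ∀ k, k ≤ n - 1 → τ k = σ k) :
    restrSum f τ n = restrSum f σ n := by
  unfold restrSum
  refine Finset.sum_congr rfl fun p _ => Finset.sum_congr rfl fun q hq => ?_
  simp only [mem_filter] at hq
  rw [h _ hq.2.1, h _ hq.2.2]

lemma coeffFTau3_congr (f τ σ : ℕ → ℂ) (m : ℕ) (h : ∀ k, k ≤ m → τ k = σ k) :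
    coeffFTau3 f τ m = coeffFTau3 f σ m := by
  unfold coeffFTau3
  refine Finset.sum_congr rfl fun p hp => Finset.sum_congr rfl fun q hq =>
    Finset.sum_congr rfl fun w hw => ?_
  rw [HasAntidiagonal.mem_antidiagonal] at hp hq hw
  rw [h q.1 (by omega), h w.1 (by omega), h w.2 (by omega)]

lemma coeffFTau2_zero (f τ : ℕ → ℂ) : coeffFTau2 f τ 0 = f 0 * τ 0 * τ 0 := by
  simp [coeffFTau2]

lemma coeffFTau3_zero (f τ : ℕ → ℂ) : coeffFTau3 f τ 0 = f 0 * τ 0 * τ 0 * τ 0 := by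
  simp [coeffFTau3]

lemma coeffFTau2_split (f τ : ℕ → ℂ) (n : ℕ) (hn : 1 ≤ n) :
    coeffFTau2 f τ n = restrSum f τ n + 2 * (f 0 * τ 0 * τ n) := by
  unfold coeffFTau2 restrSum
  have hsplit : ∀ p ∈ Finset.HasAntidiagonal.antidiagonal n,
      (∑ q ∈ Finset.HasAntidiagonal.antidiagonal p.2, f p.1 * τ q.1 * τ q.2) =
      (∑ q ∈ (Finset.HasAntidiagonal.antidiagonal p.2).filter (fun q => q.1 ≤ n - 1 ∧ q.2 ≤ n - 1),
        f p.1 * τ q.1 * τ q.2)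
      + (∑ q ∈ (Finset.HasAntidiagonal.antidiagonal p.2).filter (fun q => ¬(q.1 ≤ n - 1 ∧ q.2 ≤ n - 1)),
        f p.1 * τ q.1 * τ q.2) :=
    fun p _ => (Finset.sum_filter_add_sum_filter_not _ _ _).symm
  rw [Finset.sum_congr rfl hsplit, Finset.sum_add_distrib]
  congr 1
  rw [Finset.sum_eq_single ((0 : ℕ), n)]
  · have hset : (Finset.HasAntidiagonal.antidiagonal n).filter
        (fun q : ℕ × ℕ => ¬(q.1 ≤ n - 1 ∧ q.2 ≤ n - 1)) = {(n, 0), (0, n)} := by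
      ext ⟨a, b⟩
      simp only [mem_filter, HasAntidiagonal.mem_antidiagonal, mem_insert, mem_singleton, Prod.mk.injEq]
      omega
    rw [hset, Finset.sum_insert (by simp only [mem_singleton, Prod.mk.injEq]; omega),
      Finset.sum_singleton]
    ring
  · intro p hp hpne
    rw [HasAntidiagonal.mem_antidiagonal] at hp
    have hempty : (Finset.HasAntidiagonal.antidiagonal p.2).filter
        (fun q : ℕ × ℕ => ¬(q.1 ≤ n - 1 ∧ q.2 ≤ n - 1)) = ∅ := by
      rw [Finset.filter_eq_empty_iff]
      intro q hq
      rw [HasAntidiagonal.mem_antidiagonal] at hq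
      have hp1 : p.1 ≠ 0 := by
        intro h0
        apply hpne
        rw [Prod.ext_iff]
        exact ⟨h0, by omega⟩
      omega
    rw [hempty, Finset.sum_empty]
  · intro h
    exact absurd (HasAntidiagonal.mem_antidiagonal.mpr (by simp)) h

noncomputable def tauExt (f τfix : ℕ → ℂ) (r : ℕ) (c : ℂ) (n : ℕ) : ℂ :=
  if n < r then τfix n
  else if n = r then 0
  else (1 / ((n : ℂ) - (r : ℂ))) *
    (restrSum f (fun k => if hk : k < n then tauExt f τfix r c k else 0) n
      + c * coeffFTau3 f (fun k => if hk : k < n then tauExt f τfix r c k else 0) (n - r))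
decreasing_by all_goals exact hk

lemma tauExt_lt (f τfix : ℕ → ℂ) (r : ℕ) (c : ℂ) (n : ℕ) (h : n < r) :
    tauExt f τfix r c n = τfix n := by
  rw [tauExt, if_pos h]

lemma tauExt_self (f τfix : ℕ → ℂ) (r : ℕ) (c : ℂ) :
    tauExt f τfix r c r = 0 := by
  rw [tauExt, if_neg (lt_irrefl r), if_pos rfl]

lemma tauExt_gt (f τfix : ℕ → ℂ) (r : ℕ) (c : ℂ) (n : ℕ) (hr : 1 ≤ r) (h : r < n) :
    tauExt f τfix r c n = (1 / ((n : ℂ) - (r : ℂ))) *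
      (restrSum f (tauExt f τfix r c) n
        + c * coeffFTau3 f (tauExt f τfix r c) (n - r)) := by
  rw [tauExt, if_neg (by omega), if_neg (by omega)]
  rw [restrSum_congr f _ (tauExt f τfix r c) n (fun k hk => by rw [dif_pos (by omega)]),
    coeffFTau3_congr f _ (tauExt f τfix r c) (n - r) (fun k hk => by rw [dif_pos (by omega)])]

/-- Lemma `de-adaugat` (uniqueness of `c`): for `f ∈ ℂ{t}` a unit and `r ≥ 1`, there is a
unique `c ∈ ℂ` for which `t·τ' + r·τ = τ²·f·(1 + c·t^r·τ)` admits a formal solution `τ`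
with `τ 0 ≠ 0`; namely `c = -(1/(τ₀³ f₀))·∑_{j+k+p=r, k,p≤r-1} f_j τ_k τ_p`, where
`τ₀, …, τ_{r-1}` are determined inductively by `τ₀ = r/f₀` and
`τ_n = (1/(n-r)) ∑_{j+k+p=n, k,p≤n-1} f_j τ_k τ_p` for `1 ≤ n < r`. -/
theorem stmt_4 (f : ℕ → ℂ) (hfconv : ∃ R : ℝ, 0 < R ∧ Summable fun k => ‖f k‖ * R ^ k)
    (hf0 : f 0 ≠ 0) (r : ℕ) (hr : 1 ≤ r) (τfix : ℕ → ℂ)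
    (hτfix0 : τfix 0 = (r : ℂ) / f 0)
    (hτfixn : ∀ n : ℕ, 1 ≤ n → n < r →
      τfix n = (1 / ((n : ℂ) - (r : ℂ))) * restrSum f τfix n)
    (cval : ℂ)
    (hcval : cval = -(1 / (τfix 0 ^ 3 * f 0)) * restrSum f τfix r) :
    (∃ τ : ℕ → ℂ, τ 0 ≠ 0 ∧ ∀ n, tauEqnCoeff f τ r cval n) ∧
    ∀ c : ℂ, (∃ τ : ℕ → ℂ, τ 0 ≠ 0 ∧ ∀ n, tauEqnCoeff f τ r c n) → c = cval := by
  have hrC : ((r : ℂ)) ≠ 0 := Nat.cast_ne_zero.mpr (by omega)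
  have hτ0 : τfix 0 ≠ 0 := by rw [hτfix0]; exact div_ne_zero hrC hf0
  have hfτ0 : f 0 * τfix 0 = (r : ℂ) := by rw [hτfix0]; field_simp
  have hkey : restrSum f τfix r + cval * (f 0 * τfix 0 * τfix 0 * τfix 0) = 0 := by
    rw [hcval]
    field_simp
    ring
  constructor
  · refine ⟨tauExt f τfix r cval, ?_, ?_⟩
    · rw [tauExt_lt _ _ _ _ 0 (by omega)]; exact hτ0
    · set τ := tauExt f τfix r cval with hτdef
      have hlt : ∀ k, k < r → τ k = τfix k := fun k hk => tauExt_lt _ _ _ _ k hk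
      intro n
      unfold tauEqnCoeff
      rcases lt_trichotomy n r with hn | hn | hn
      · rw [if_neg (by omega)]
        rcases Nat.eq_zero_or_pos n with rfl | hn1
        · rw [coeffFTau2_zero, hlt 0 (by omega), hτfix0]
          push_cast
          field_simp
          ring
        · have hnr : ((n : ℂ) - (r : ℂ)) ≠ 0 :=
            sub_ne_zero.mpr (by exact_mod_cast (by omega : n ≠ r))
          rw [coeffFTau2_split f τ n hn1, hlt 0 (by omega),
            restrSum_congr f τ τfix n (fun k hk => hlt k (by omega)),
            hlt n hn, hτfixn n hn1 hn, hfτ0]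
          field_simp
          ring
      · subst hn
        have hτr : τ n = 0 := tauExt_self f τfix n cval
        rw [if_pos le_rfl, Nat.sub_self, coeffFTau3_zero, coeffFTau2_split f τ n hr,
          restrSum_congr f τ τfix n (fun k hk => hlt k (by omega)),
          hlt 0 (by omega), hτr]
        linear_combination -hkey
      · rw [if_pos (by omega)]
        have hnr : ((n : ℂ) - (r : ℂ)) ≠ 0 :=
          sub_ne_zero.mpr (by exact_mod_cast (by omega : n ≠ r))
        have hrec := tauExt_gt f τfix r cval n hr hn
        rw [← hτdef] at hrec
        have hmul : ((n : ℂ) - (r : ℂ)) * τ n =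
            restrSum f τ n + cval * coeffFTau3 f τ (n - r) := by
          rw [hrec]
          field_simp
        rw [coeffFTau2_split f τ n (by omega), hlt 0 (by omega), hfτ0]
        linear_combination hmul
  · rintro c ⟨τ, hτne, heq⟩
    have h0 := heq 0
    unfold tauEqnCoeff at h0
    rw [if_neg (by omega), coeffFTau2_zero] at h0
    have hft : f 0 * τ 0 = (r : ℂ) := by
      apply mul_right_cancel₀ hτne
      linear_combination -h0
    have hτ00 : τ 0 = τfix 0 := by
      rw [hτfix0, eq_div_iff hf0]
      linear_combination hft
    have hlt : ∀ n, n < r → τ n = τfix n := by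
      intro n
      induction n using Nat.strong_induction_on with
      | _ n ih =>
        intro hn
        rcases Nat.eq_zero_or_pos n with rfl | hn1
        · exact hτ00
        · have h := heq n
          unfold tauEqnCoeff at h
          rw [if_neg (by omega), coeffFTau2_split f τ n hn1,
            restrSum_congr f τ τfix n (fun k hk => ih k (by omega) (by omega)),
            hτ00, hfτ0] at h
          have hnr : ((n : ℂ) - (r : ℂ)) ≠ 0 :=
            sub_ne_zero.mpr (by exact_mod_cast (by omega : n ≠ r))
          have hS : restrSum f τfix n = ((n : ℂ) - (r : ℂ)) * τ n := by
            linear_combination -h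
          rw [hτfixn n hn1 hn, hS]
          field_simp
    have hrr := heq r
    unfold tauEqnCoeff at hrr
    rw [if_pos le_rfl, Nat.sub_self, coeffFTau3_zero, coeffFTau2_split f τ r hr,
      restrSum_congr f τ τfix r (fun k hk => hlt k (by omega)), hτ00, hfτ0] at hrr
    have hc : c * ((r : ℂ) * τfix 0 * τfix 0) = cval * ((r : ℂ) * τfix 0 * τfix 0) := by
      linear_combination -hrr - hkey + cval * τfix 0 * τfix 0 * hfτ0
    exact mul_right_cancel₀ (mul_ne_zero (mul_ne_zero hrC hτ0) hτ0) hc
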